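/- Let ℓ > 0 and let θ, φ : [0, ℓ] → ℝ be C² functions, and let c : [0, ℓ] → ℝ and p > 0 be such that: θ'' (s) - (c(s) + p²) θ(s) > 0 on [0, ℓ], θ > 0 on (0, ℓ), θ(0) = θ(ℓ) = 0; and φ''(s) + (π²/ℓ² - p²) φ(s) = 0 on [0, ℓ], φ > 0 on (0, ℓ], φ(0) = 0, with 0 < p < π/ℓ. If moreover -c(s) ≤ π²/ℓ² for all s ∈ [0, ℓ], then a contradiction follows (i.e., no such pair θ, φ exists). Equivalently: if θ satisfies θ'' - (c + p²)θ > 0 on [0,ℓ] with θ(0)=θ(ℓ)=0 and θ > 0 on (0,ℓ), then sup_{s∈[0,ℓ]} (-c(s)) > π²/ℓ². -/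

import Mathlib

open Real Set

/-- Sturm comparison contradiction behind Lemma "Necessary size of ḡ":
no pair (θ, φ) as below can exist when `-c ≤ π²/ℓ²` on `[0, ℓ]`. -/
theorem stmt0 (ℓ p : ℝ) (θ φ c : ℝ → ℝ)
    (hℓ : 0 < ℓ) (hp : 0 < p) (hpπ : p < π / ℓ)
    (hθC : ContDiff ℝ 2 θ) (hφC : ContDiff ℝ 2 φ)
    (hθode : ∀ s ∈ Icc (0:ℝ) ℓ, deriv (deriv θ) s - (c s + p ^ 2) * θ s > 0)
    (hθpos : ∀ s ∈ Ioo (0:ℝ) ℓ, 0 < θ s)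
    (hθ0 : θ 0 = 0) (hθℓ : θ ℓ = 0)
    (hφode : ∀ s ∈ Icc (0:ℝ) ℓ,
      deriv (deriv φ) s + (π ^ 2 / ℓ ^ 2 - p ^ 2) * φ s = 0)
    (hφpos : ∀ s ∈ Ioc (0:ℝ) ℓ, 0 < φ s)
    (hφ0 : φ 0 = 0)
    (hc : ∀ s ∈ Icc (0:ℝ) ℓ, -c s ≤ π ^ 2 / ℓ ^ 2) :
    False := by
  have hθd : Differentiable ℝ θ := hθC.differentiable (by norm_num)
  have hφd : Differentiable ℝ φ := hφC.differentiable (by norm_num)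
  have hθd' : Differentiable ℝ (deriv θ) := by
    have h2 : ContDiff ℝ ((1:ℕ) + 1) θ := by exact_mod_cast hθC
    exact (contDiff_succ_iff_deriv.mp h2).2.2.differentiable (by norm_num)
  have hφd' : Differentiable ℝ (deriv φ) := by
    have h2 : ContDiff ℝ ((1:ℕ) + 1) φ := by exact_mod_cast hφC
    exact (contDiff_succ_iff_deriv.mp h2).2.2.differentiable (by norm_num)
  set W : ℝ → ℝ := fun s => deriv θ s * φ s - θ s * deriv φ s with hWdef
  have hW : ∀ s, HasDerivAt W
      (deriv (deriv θ) s * φ s - θ s * deriv (deriv φ) s) s := by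
    intro s
    have h1 := (hθd' s).hasDerivAt.mul (hφd s).hasDerivAt
    have h2 := (hθd s).hasDerivAt.mul (hφd' s).hasDerivAt
    have h3 := h1.sub h2
    refine h3.congr_deriv ?_
    ring
  have hWmono : StrictMonoOn W (Icc 0 ℓ) := by
    apply strictMonoOn_of_deriv_pos (convex_Icc 0 ℓ)
    · exact fun s _ => ((hW s).differentiableAt.continuousAt).continuousWithinAt
    · intro s hs
      rw [interior_Icc] at hs
      rw [(hW s).deriv]
      have hθs := hθpos s hs
      have hφs := hφpos s ⟨hs.1, hs.2.le⟩
      have h1 := hθode s ⟨hs.1.le, hs.2.le⟩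
      have h2 := hφode s ⟨hs.1.le, hs.2.le⟩
      have hcs := hc s ⟨hs.1.le, hs.2.le⟩
      have key : (c s + p ^ 2) * θ s * φ s < deriv (deriv θ) s * φ s :=
        mul_lt_mul_of_pos_right (by linarith) hφs
      have H : 0 ≤ (c s + π ^ 2 / ℓ ^ 2) * (θ s * φ s) :=
        mul_nonneg (by linarith) (mul_pos hθs hφs).le
      have hd2φ : deriv (deriv φ) s = -(π ^ 2 / ℓ ^ 2 - p ^ 2) * φ s := by linarith
      rw [hd2φ]
      nlinarith [key, H]
  have hφℓ : 0 < φ ℓ := hφpos ℓ ⟨hℓ, le_rfl⟩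
  have hdθℓ : deriv θ ℓ ≤ 0 := by
    have hT : Filter.Tendsto (slope θ ℓ) (nhdsWithin ℓ (Iio ℓ)) (nhds (deriv θ ℓ)) :=
      ((hasDerivAt_iff_tendsto_slope.mp (hθd ℓ).hasDerivAt)).mono_left
        (nhdsWithin_mono _ (fun x hx => ne_of_lt hx))
    refine le_of_tendsto hT ?_
    filter_upwards [Ioo_mem_nhdsLT_of_mem (⟨hℓ, le_rfl⟩ : ℓ ∈ Ioc 0 ℓ)] with s hs
    rw [slope_def_field]
    apply div_nonpos_of_nonneg_of_nonpos
    · linarith [hθpos s hs]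
    · linarith [hs.2]
  have hW0 : W 0 = 0 := by simp [hWdef, hθ0, hφ0]
  have hWℓ : W ℓ ≤ 0 := by
    have : deriv θ ℓ * φ ℓ ≤ 0 := mul_nonpos_of_nonpos_of_nonneg hdθℓ hφℓ.le
    simp only [hWdef, hθℓ]
    nlinarith
  have hlt : W 0 < W ℓ := hWmono ⟨le_rfl, hℓ.le⟩ ⟨hℓ.le, le_rfl⟩ hℓ
  linarith
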